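/- For any positive definite matrix A, the derivative at X = A of the map X ↦ A # X equals Y ↦ Y/2; consequently the first derivative of Φ₃(A,X) = tr(A+X) − 2 tr(A # X) with respect to X vanishes at X = A. -/

import Mathlib

open scoped ComplexOrder
open MeasureTheory

/-- The positive semidefinite square root of a matrix (zero if not positive semidefinite). -/
noncomputable def msqrt {N : ℕ} (A : Matrix (Fin N) (Fin N) ℂ) : Matrix (Fin N) (Fin N) ℂ :=
  by classical exact if h : A.PosSemidef then (h.1.eigenvectorUnitary : Matrix (Fin N) (Fin N) ℂ) *
    Matrix.diagonal ((↑) ∘ (√·) ∘ h.1.eigenvalues) *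
    (star (h.1.eigenvectorUnitary : Matrix (Fin N) (Fin N) ℂ)) else 0

/-- The Pusz–Woronowicz geometric mean `A # B = A^{1/2} (A^{-1/2} B A^{-1/2})^{1/2} A^{1/2}`. -/
noncomputable def geom {N : ℕ} (A B : Matrix (Fin N) (Fin N) ℂ) : Matrix (Fin N) (Fin N) ℂ :=
  msqrt A * msqrt ((msqrt A)⁻¹ * B * (msqrt A)⁻¹) * msqrt A

/-- The logarithm of a Hermitian matrix, via the spectral theorem (zero if not Hermitian). -/
noncomputable def mlog {N : ℕ} (A : Matrix (Fin N) (Fin N) ℂ) : Matrix (Fin N) (Fin N) ℂ :=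
  by classical exact if h : A.IsHermitian then h.cfc Real.log else 0

/-- The log Euclidean mean `exp((log A + log B)/2)`. -/
noncomputable def logEuclid {N : ℕ} (A B : Matrix (Fin N) (Fin N) ℂ) : Matrix (Fin N) (Fin N) ℂ :=
  NormedSpace.exp ((2:ℂ)⁻¹ • (mlog A + mlog B))

open scoped MatrixOrder in
lemma msqrt_eq_sqrt {N : ℕ} {A : Matrix (Fin N) (Fin N) ℂ} (h : A.PosSemidef) :
    msqrt A = CFC.sqrt A := by
  classical
  rw [msqrt, dif_pos h, CFC.sqrt_eq_cfc, cfc_nnreal_eq_real _ A, h.1.cfc_eq,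
    Matrix.IsHermitian.cfc, Unitary.conjStarAlgAut_apply]
  congr 3
  funext m
  simp [Real.coe_toNNReal', max_eq_left (h.eigenvalues_nonneg m)]

open scoped MatrixOrder in
lemma msqrt_posSemidef {N : ℕ} {A : Matrix (Fin N) (Fin N) ℂ} (h : A.PosSemidef) :
    (msqrt A).PosSemidef := by
  rw [msqrt_eq_sqrt h]; exact Matrix.nonneg_iff_posSemidef.mp (CFC.sqrt_nonneg A)

open scoped MatrixOrder in
lemma msqrt_mul_self' {N : ℕ} {A : Matrix (Fin N) (Fin N) ℂ} (h : A.PosSemidef) :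
    msqrt A * msqrt A = A := by
  rw [msqrt_eq_sqrt h]; exact CFC.sqrt_mul_sqrt_self A h.nonneg

open scoped MatrixOrder in
lemma msqrt_eq_of {N : ℕ} {M F : Matrix (Fin N) (Fin N) ℂ} (hM : M.PosSemidef)
    (hF : F.PosSemidef) (h : F * F = M) : msqrt M = F := by
  rw [msqrt_eq_sqrt hM]; exact (CFC.sqrt_eq_iff _ _ hM.nonneg hF.nonneg).mpr h

/-- entrywise derivative of `t ↦ P * diagonal (v t) * Q`. -/
lemma hasDerivAt_PdQ {N : ℕ} (P Q : Matrix (Fin N) (Fin N) ℂ)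
    (v : ℝ → Fin N → ℂ) (w : Fin N → ℂ)
    (hv : ∀ m, HasDerivAt (fun t => v t m) (w m) 0) (i j : Fin N) :
    HasDerivAt (fun t => (P * Matrix.diagonal (v t) * Q) i j)
      ((P * Matrix.diagonal w * Q) i j) 0 := by
  have key : ∀ (u : Fin N → ℂ),
      (P * Matrix.diagonal u * Q) i j = ∑ m, P i m * u m * Q m j := by
    intro u
    rw [Matrix.mul_apply]
    simp [Matrix.mul_diagonal]
  simp only [key]
  exact HasDerivAt.fun_sum fun m _ => ((hv m).const_mul (P i m)).mul_const (Q m j)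

set_option maxHeartbeats 1000000 in
/-- The derivative at `X = A` of `X ↦ A # X` is `Y ↦ Y/2`; consequently the derivative of
`Φ₃(A,X) = tr(A+X) - 2 tr(A # X)` with respect to `X` vanishes at `X = A`. -/
theorem stmt10 {N : ℕ} (A : Matrix (Fin N) (Fin N) ℂ) (hA : A.PosDef)
    (Y : Matrix (Fin N) (Fin N) ℂ) (hY : Y.IsHermitian) :
    (∀ i j, HasDerivAt (fun t : ℝ => geom A (A + t • Y) i j) (((2:ℂ)⁻¹ • Y) i j) 0) ∧
    HasDerivAt (fun t : ℝ => (A + (A + t • Y)).trace - 2 * (geom A (A + t • Y)).trace)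
      0 0 := by
  classical
  have hAps := hA.posSemidef
  set S : Matrix (Fin N) (Fin N) ℂ := msqrt A with hSdef
  have hS_eq : S = msqrt A := hSdef
  have hS_ps : S.PosSemidef := by rw [hS_eq]; exact msqrt_posSemidef hAps
  have hS_herm : S.IsHermitian := hS_ps.1
  have hSS : S * S = A := by rw [hS_eq]; exact msqrt_mul_self' hAps
  have hSdet : IsUnit S.det := by
    have hAdet : IsUnit A.det := (Matrix.isUnit_iff_isUnit_det A).mp hA.isUnit
    rw [← hSS, Matrix.det_mul] at hAdet
    exact (IsUnit.mul_iff.mp hAdet).1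
  have hSinv_mul : S⁻¹ * S = 1 := Matrix.nonsing_inv_mul S hSdet
  have hmul_Sinv : S * S⁻¹ = 1 := Matrix.mul_nonsing_inv S hSdet
  set C : Matrix (Fin N) (Fin N) ℂ := S⁻¹ * Y * S⁻¹ with hCdef
  have hSinv_herm : (S⁻¹).IsHermitian := hS_herm.inv
  have hC : C.IsHermitian := by
    unfold Matrix.IsHermitian
    rw [hCdef, Matrix.conjTranspose_mul, Matrix.conjTranspose_mul,
      hSinv_herm.eq, hY.eq, mul_assoc]
  set U : Matrix (Fin N) (Fin N) ℂ := (hC.eigenvectorUnitary : Matrix (Fin N) (Fin N) ℂ)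
    with hUdef
  set d : Fin N → ℝ := hC.eigenvalues with hddef
  have hspec : C = U * Matrix.diagonal ((↑) ∘ d) * star U := hC.spectral_theorem
  have hUU' : U * star U = 1 := (Matrix.mem_unitaryGroup_iff).mp hC.eigenvectorUnitary.2
  have hU'U : star U * U = 1 := (Matrix.mem_unitaryGroup_iff').mp hC.eigenvectorUnitary.2
  set v : ℝ → Fin N → ℂ := fun t m => ((Real.sqrt (1 + t * d m) : ℝ) : ℂ) with hvdef
  set F : ℝ → Matrix (Fin N) (Fin N) ℂ := fun t => U * Matrix.diagonal (v t) * star U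
    with hFdef
  -- eventual positivity
  have hev : ∀ᶠ t in nhds (0:ℝ), ∀ m, 0 < 1 + t * d m := by
    rw [Filter.eventually_all]
    intro m
    have ho : IsOpen {t : ℝ | 0 < 1 + t * d m} :=
      isOpen_lt continuous_const (continuous_const.add (continuous_id.mul continuous_const))
    exact ho.mem_nhds (by simp)
  -- local formula for geom
  have hgeom : ∀ t : ℝ, (∀ m, 0 < 1 + t * d m) →
      geom A (A + t • Y) = S * F t * S := by
    intro t ht
    have hMt : S⁻¹ * (A + t • Y) * S⁻¹
        = U * Matrix.diagonal (fun m => ((1 + t * d m : ℝ) : ℂ)) * star U := by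
      have e1 : S⁻¹ * (A + t • Y) * S⁻¹ = 1 + t • C := by
        rw [Matrix.mul_add, Matrix.add_mul]
        congr 1
        · rw [← hSS]
          simp only [← mul_assoc]
          rw [hSinv_mul, one_mul, hmul_Sinv]
        · rw [Matrix.mul_smul, Matrix.smul_mul, hCdef]
      rw [e1, hspec]
      have e2 : Matrix.diagonal (fun m => ((1 + t * d m : ℝ) : ℂ))
          = 1 + t • Matrix.diagonal ((↑) ∘ d : Fin N → ℂ) := by
        ext i k
        rcases eq_or_ne i k with h | h
        · subst h
          simp [Matrix.diagonal_apply_eq, Complex.real_smul]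
        · simp [Matrix.diagonal_apply_ne _ h, Matrix.one_apply_ne h]
      rw [e2, Matrix.mul_add, Matrix.add_mul, Matrix.mul_one, hUU',
        Matrix.mul_smul, Matrix.smul_mul]
    have hDps : (Matrix.diagonal (fun m => ((1 + t * d m : ℝ) : ℂ))).PosSemidef :=
      Matrix.posSemidef_diagonal_iff.mpr fun m => Complex.zero_le_real.mpr (ht m).le
    have hMt_ps : (S⁻¹ * (A + t • Y) * S⁻¹).PosSemidef := by
      rw [hMt, Matrix.star_eq_conjTranspose]
      exact hDps.mul_mul_conjTranspose_same U
    have hF_ps : (F t).PosSemidef := by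
      rw [hFdef]
      simp only [Matrix.star_eq_conjTranspose]
      exact (Matrix.posSemidef_diagonal_iff.mpr fun m =>
        Complex.zero_le_real.mpr (Real.sqrt_nonneg _)).mul_mul_conjTranspose_same U
    have hFsq : F t * F t = S⁻¹ * (A + t • Y) * S⁻¹ := by
      rw [hMt, hFdef]
      calc U * Matrix.diagonal (v t) * star U * (U * Matrix.diagonal (v t) * star U)
          = U * (Matrix.diagonal (v t) * (star U * U) * Matrix.diagonal (v t)) * star U := by
            simp only [mul_assoc]
        _ = U * Matrix.diagonal (fun m => ((1 + t * d m : ℝ) : ℂ)) * star U := by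
            rw [hU'U, mul_one, Matrix.diagonal_mul_diagonal]
            have hvv : (fun i => v t i * v t i) = fun m => ((1 + t * d m : ℝ) : ℂ) := by
              funext m
              rw [hvdef]
              rw [← Complex.ofReal_mul, Real.mul_self_sqrt (ht m).le]
            rw [hvv]
    have hmsqrt : msqrt (S⁻¹ * (A + t • Y) * S⁻¹) = F t := by
      exact msqrt_eq_of hMt_ps hF_ps hFsq
    rw [geom, ← hSdef, hmsqrt]
  -- the key derivative for entries
  have hv : ∀ m, HasDerivAt (fun t => v t m) (((d m / 2 : ℝ) : ℂ)) 0 := by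
    intro m
    have h0 : HasDerivAt (fun t : ℝ => 1 + t * d m) (1 * d m) 0 :=
      ((hasDerivAt_id (0:ℝ)).mul_const (d m)).const_add 1
    have h1 : HasDerivAt (fun t : ℝ => Real.sqrt (1 + t * d m))
        ((1 * d m) / (2 * Real.sqrt (1 + 0 * d m))) 0 :=
      h0.sqrt (by norm_num)
    have h2 := h1.ofReal_comp
    convert h2 using 2
    norm_num
  have hder : ∀ i j, HasDerivAt (fun t => (S * F t * S) i j) (((2:ℂ)⁻¹ • Y) i j) 0 := by
    intro i j
    have hrw : ∀ t, S * F t * S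
        = (S * U) * Matrix.diagonal (v t) * (star U * S) := by
      intro t; rw [hFdef]; simp only [mul_assoc]
    have hmat : (S * U) * Matrix.diagonal (fun m => ((d m / 2 : ℝ) : ℂ)) * (star U * S)
        = (2:ℂ)⁻¹ • Y := by
      have e : Matrix.diagonal (fun m => ((d m / 2 : ℝ) : ℂ))
          = (2:ℂ)⁻¹ • Matrix.diagonal ((↑) ∘ d : Fin N → ℂ) := by
        have efun : (fun m => ((d m / 2 : ℝ) : ℂ)) = (2:ℂ)⁻¹ • ((↑) ∘ d : Fin N → ℂ) := by
          funext m
          simp [Function.comp, smul_eq_mul]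
          ring
        rw [efun, Matrix.diagonal_smul]
      rw [e, Matrix.mul_smul, Matrix.smul_mul]
      congr 1
      calc S * U * Matrix.diagonal ((↑) ∘ d : Fin N → ℂ) * (star U * S)
          = S * (U * Matrix.diagonal ((↑) ∘ d) * star U) * S := by
            simp only [mul_assoc]
        _ = S * C * S := by rw [← hspec]
        _ = Y := by
            rw [hCdef]
            simp only [← mul_assoc]
            rw [hmul_Sinv, one_mul, mul_assoc, hSinv_mul, mul_one]
    have := hasDerivAt_PdQ (S * U) (star U * S) v (fun m => ((d m / 2 : ℝ) : ℂ)) hv i j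
    rw [hmat] at this
    simp only [hrw] at this ⊢
    exact this
  have hfinal : ∀ i j, HasDerivAt (fun t : ℝ => geom A (A + t • Y) i j)
      (((2:ℂ)⁻¹ • Y) i j) 0 := by
    intro i j
    refine (hder i j).congr_of_eventuallyEq ?_
    filter_upwards [hev] with t ht
    rw [hgeom t ht]
  refine ⟨hfinal, ?_⟩
  have h1 : HasDerivAt (fun t : ℝ => (A + (A + t • Y)).trace) Y.trace 0 := by
    have e : (fun t : ℝ => (A + (A + t • Y)).trace)
        = fun t : ℝ => (A.trace + A.trace) + (t : ℂ) * Y.trace := by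
      funext t
      simp [Matrix.trace_add, Matrix.trace_smul, Complex.real_smul]
      ring
    rw [e]
    have := (((hasDerivAt_id (0:ℝ)).ofReal_comp).mul_const Y.trace).const_add
      (A.trace + A.trace)
    simpa using this
  have h2 : HasDerivAt (fun t : ℝ => (geom A (A + t • Y)).trace)
      ((2:ℂ)⁻¹ * Y.trace) 0 := by
    have hsum := HasDerivAt.fun_sum (fun i (_ : i ∈ Finset.univ) => hfinal i i)
    have e2 : ∑ i, ((2:ℂ)⁻¹ • Y) i i = (2:ℂ)⁻¹ * Y.trace := by
      simp [Matrix.trace, Matrix.diag, Finset.mul_sum, smul_eq_mul]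
    rw [e2] at hsum
    simpa [Matrix.trace, Matrix.diag] using hsum
  have := h1.fun_sub (h2.const_mul 2)
  exact this.congr_deriv (by ring)
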